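/- For integers n ≥ 2, the quantity m₄(n,1) = ((n+14)/n - 6H̄₂)·H̄₁ + 3(n-2)·H̄₁²/n + 4H̄₁³/n - (18+7n)·H̄₂/n + 3H̄₂² + 4(2+3n)·H̄₃/n - 6H̄₄, where H̄_o = ∑_{i=1}^{n-1} 1/i^o, satisfies m₄(n,1)/ (k·log n)² → 3 with k = 1; that is, lim_{n→∞} m₄(n,1)/(log n)² = 3. -/

import Mathlib

open Finset Filter Topology

/-- `harmBar o n = ∑_{i=1}^{n-1} 1/i^o`, the modified generalized harmonic number. -/
noncomputable def harmBar (o n : ℕ) : ℝ := ∑ i ∈ Finset.Icc 1 (n - 1), (1 : ℝ) / (i : ℝ) ^ o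

lemma harmBar_eq (o n : ℕ) : harmBar o n = ∑ i ∈ Finset.range (n-1), (1:ℝ)/((i:ℝ)+1)^o := by
  rw [harmBar, ← Finset.Ico_add_one_right_eq_Icc, Finset.sum_Ico_eq_sum_range]
  simp only [Nat.add_sub_cancel]
  refine Finset.sum_congr rfl fun i _ => ?_
  push_cast; ring_nf

lemma harmBar_one (n : ℕ) : harmBar 1 n = (harmonic (n-1) : ℝ) := by
  rw [harmBar_eq, harmonic]
  push_cast
  refine Finset.sum_congr rfl fun i _ => ?_
  rw [one_div, pow_one]

lemma harmBar_tendsto {o : ℕ} (ho : 2 ≤ o) :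
    ∃ L : ℝ, Tendsto (fun n => harmBar o n) atTop (𝓝 L) := by
  have hs0 : Summable (fun i : ℕ => (1:ℝ)/(i:ℝ)^o) := Real.summable_one_div_nat_pow.2 ho
  have hs : Summable (fun i : ℕ => (1:ℝ)/((i:ℝ)+1)^o) := by
    have := (summable_nat_add_iff 1).2 hs0
    refine this.congr fun i => ?_
    push_cast; ring_nf
  refine ⟨∑' i : ℕ, (1:ℝ)/((i:ℝ)+1)^o, ?_⟩
  have h1 := hs.hasSum.tendsto_sum_nat
  have h2 : Tendsto (fun n : ℕ => n - 1) atTop atTop := tendsto_sub_atTop_nat 1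
  have h3 := h1.comp h2
  refine h3.congr fun n => ?_
  simp [harmBar_eq]

lemma hlog_atTop : Tendsto (fun n : ℕ => Real.log n) atTop atTop :=
  Real.tendsto_log_atTop.comp tendsto_natCast_atTop_atTop

lemma hinvlog : Tendsto (fun n : ℕ => 1 / Real.log n) atTop (𝓝 0) := by
  exact hlog_atTop.inv_tendsto_atTop.congr (fun n => by simp [one_div])

lemma h1_div_log : Tendsto (fun n : ℕ => harmBar 1 n / Real.log n) atTop (𝓝 1) := by
  -- harmBar 1 n - log (n-1) → γ
  have hA : Tendsto (fun n : ℕ => harmBar 1 n - Real.log ((n:ℝ) - 1)) atTop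
      (𝓝 Real.eulerMascheroniConstant) := by
    have h := Real.tendsto_harmonic_sub_log.comp (tendsto_sub_atTop_nat 1)
    refine (h.congr' ?_)
    filter_upwards [eventually_ge_atTop 1] with n hn
    simp only [Function.comp_apply, harmBar_one]
    rw [Nat.cast_sub hn]
    norm_num
  -- log(n-1) - log n → 0
  have hB : Tendsto (fun n : ℕ => Real.log ((n:ℝ) - 1) - Real.log n) atTop (𝓝 0) := by
    have hc : Tendsto (fun n : ℕ => 1 - 1/(n:ℝ)) atTop (𝓝 1) := by
      simpa using tendsto_const_nhds.sub (tendsto_one_div_atTop_nhds_zero_nat : Tendsto (fun n : ℕ => 1/(n:ℝ)) atTop (𝓝 0))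
    have := ((Real.continuousAt_log one_ne_zero).tendsto.comp hc)
    rw [Real.log_one] at this
    refine this.congr' ?_
    filter_upwards [eventually_ge_atTop 2] with n hn
    have hn0 : (n:ℝ) ≠ 0 := by positivity
    have : (1:ℝ) - 1/(n:ℝ) = ((n:ℝ) - 1)/(n:ℝ) := by field_simp
    simp only [Function.comp_apply, this]
    rw [Real.log_div (by
      have : (2:ℝ) ≤ (n:ℝ) := by exact_mod_cast hn
      linarith) hn0]
  -- combine
  have key : Tendsto (fun n : ℕ => (harmBar 1 n - Real.log ((n:ℝ)-1)) * (1/Real.log n)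
      + (Real.log ((n:ℝ)-1) - Real.log n) * (1/Real.log n) + 1) atTop (𝓝 1) := by
    have := ((hA.mul hinvlog).add (hB.mul hinvlog)).add (tendsto_const_nhds (x := (1:ℝ)))
    simpa using this
  refine key.congr' ?_
  filter_upwards [eventually_ge_atTop 2] with n hn
  have hlogne : Real.log n ≠ 0 := by
    have : (1:ℝ) < (n:ℝ) := by exact_mod_cast Nat.lt_of_lt_of_le one_lt_two hn
    exact ne_of_gt (Real.log_pos this)
  field_simp
  ring

/-- The fourth central moment `m₄(n,1)` of the absent-minded passengers problem
with one absent-minded passenger. -/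
noncomputable def m4 (n : ℕ) : ℝ :=
  (((n : ℝ) + 14) / (n : ℝ) - 6 * harmBar 2 n) * harmBar 1 n +
    3 * ((n : ℝ) - 2) * (harmBar 1 n) ^ 2 / (n : ℝ) +
    4 * (harmBar 1 n) ^ 3 / (n : ℝ) -
    (18 + 7 * (n : ℝ)) * harmBar 2 n / (n : ℝ) +
    3 * (harmBar 2 n) ^ 2 +
    4 * (2 + 3 * (n : ℝ)) * harmBar 3 n / (n : ℝ) -
    6 * harmBar 4 n

/-- `m₄(n,1)/(log n)² → 3` as `n → ∞`. -/
theorem m4_div_log_sq_tendsto :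
    Tendsto (fun n : ℕ => m4 n / (Real.log n) ^ 2) atTop (𝓝 3) := by
  obtain ⟨L2, h2⟩ := harmBar_tendsto (le_refl 2)
  obtain ⟨L3, h3⟩ := harmBar_tendsto (show 2 ≤ 3 by norm_num)
  obtain ⟨L4, h4⟩ := harmBar_tendsto (show 2 ≤ 4 by norm_num)
  have hinv : Tendsto (fun n : ℕ => 1/(n:ℝ)) atTop (𝓝 0) := tendsto_one_div_atTop_nhds_zero_nat
  have hldn : Tendsto (fun n : ℕ => Real.log n / n) atTop (𝓝 0) :=
    (Real.isLittleO_log_id_atTop.tendsto_div_nhds_zero).comp tendsto_natCast_atTop_atTop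
  have r1 : Tendsto (fun n : ℕ => ((n:ℝ)+14)/n) atTop (𝓝 1) := by
    have : Tendsto (fun n : ℕ => 1 + 14*(1/(n:ℝ))) atTop (𝓝 (1 + 14*0)) :=
      tendsto_const_nhds.add (hinv.const_mul 14)
    norm_num at this
    refine this.congr' ?_
    filter_upwards [eventually_ge_atTop 1] with n hn
    have hn0 : (n:ℝ) ≠ 0 := by positivity
    field_simp
  have r2 : Tendsto (fun n : ℕ => ((n:ℝ)-2)/n) atTop (𝓝 1) := by
    have : Tendsto (fun n : ℕ => 1 - 2*(1/(n:ℝ))) atTop (𝓝 (1 - 2*0)) :=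
      tendsto_const_nhds.sub (hinv.const_mul 2)
    norm_num at this
    refine this.congr' ?_
    filter_upwards [eventually_ge_atTop 1] with n hn
    have hn0 : (n:ℝ) ≠ 0 := by positivity
    field_simp
  have r3 : Tendsto (fun n : ℕ => (18+7*(n:ℝ))/n) atTop (𝓝 7) := by
    have : Tendsto (fun n : ℕ => 18*(1/(n:ℝ)) + 7) atTop (𝓝 (18*0 + 7)) :=
      (hinv.const_mul 18).add tendsto_const_nhds
    norm_num at this
    refine this.congr' ?_
    filter_upwards [eventually_ge_atTop 1] with n hn
    have hn0 : (n:ℝ) ≠ 0 := by positivity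
    field_simp
  have r4 : Tendsto (fun n : ℕ => (2+3*(n:ℝ))/n) atTop (𝓝 3) := by
    have : Tendsto (fun n : ℕ => 2*(1/(n:ℝ)) + 3) atTop (𝓝 (2*0 + 3)) :=
      (hinv.const_mul 2).add tendsto_const_nhds
    norm_num at this
    refine this.congr' ?_
    filter_upwards [eventually_ge_atTop 1] with n hn
    have hn0 : (n:ℝ) ≠ 0 := by positivity
    field_simp
  have t1 := ((r1.sub (h2.const_mul 6)).mul h1_div_log).mul hinvlog
  have t2 := (r2.const_mul 3).mul (h1_div_log.pow 2)
  have t3 := ((h1_div_log.pow 3).const_mul 4).mul hldn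
  have t4 := (r3.mul h2).mul (hinvlog.pow 2)
  have t5 := ((h2.pow 2).const_mul 3).mul (hinvlog.pow 2)
  have t6 := ((r4.const_mul 4).mul h3).mul (hinvlog.pow 2)
  have t7 := (h4.const_mul 6).mul (hinvlog.pow 2)
  have big := (((((t1.add t2).add t3).sub t4).add t5).add t6).sub t7
  have big3 : Tendsto (fun n : ℕ =>
      (((n:ℝ)+14)/n - 6 * harmBar 2 n) * (harmBar 1 n / Real.log n) * (1/Real.log n)
      + 3 * (((n:ℝ)-2)/n) * (harmBar 1 n / Real.log n)^2
      + 4 * (harmBar 1 n / Real.log n)^3 * (Real.log n / n)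
      - (18+7*(n:ℝ))/n * harmBar 2 n * (1/Real.log n)^2
      + 3 * (harmBar 2 n)^2 * (1/Real.log n)^2
      + 4 * ((2+3*(n:ℝ))/n) * harmBar 3 n * (1/Real.log n)^2
      - 6 * harmBar 4 n * (1/Real.log n)^2) atTop (𝓝 3) := by
    convert big using 2
    norm_num
  refine Tendsto.congr' ?_ big3
  filter_upwards [eventually_ge_atTop 2] with n hn
  have hn0 : (n:ℝ) ≠ 0 := by positivity
  have hlogne : Real.log n ≠ 0 := by
    have : (1:ℝ) < (n:ℝ) := by exact_mod_cast Nat.lt_of_lt_of_le one_lt_two hn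
    exact ne_of_gt (Real.log_pos this)
  simp only [m4]
  field_simp
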